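/- Let G be a data graph, let Q be a BGP query, and let D_CV(Q) = (Q_1, Q_2, …, Q_n) be the connected-variable decomposition of Q. If e_1, e_2, …, e_n are total embeddings of Q_1, Q_2, …, Q_n respectively in G, then e_1, e_2, …, e_n are pairwise compatible partial embeddings of Q in G, and e = e_1 ⊗ e_2 ⊗ … ⊗ e_n is a total embedding of Q in G. -/

import Mathlib

/-!
Formalization of BGP queries over Linked Data graphs.

Nodes are drawn from a type `N`, predicates from a type `P`.
`Uso` is the set of URIs usable as subjects/objects, `Lit` the set of literals,
`Var` the set of variables.  Partial mappings are modelled as `N → Option N`.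
-/

namespace RDFBGP

variable {N P : Type}

/-- A triple (subject, predicate, object). -/
abbrev Triple (N P : Type) := N × P × N

/-- Subject of a triple. -/
def subj (t : Triple N P) : N := t.1

/-- Predicate of a triple. -/
def pred (t : Triple N P) : P := t.2.1

/-- Object of a triple. -/
def obj (t : Triple N P) : N := t.2.2

/-- The set of nodes (subjects and objects) of a set of triples. -/
def nodes (Q : Set (Triple N P)) : Set N := {v | ∃ t ∈ Q, subj t = v ∨ obj t = v}

/-- The variables of a query: its nodes that lie in `Var`. -/
def varsOf (Var : Set N) (Q : Set (Triple N P)) : Set N := nodes Q ∩ Var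

/-- A data graph: a nonempty set of data triples (subjects are URIs, objects URIs or
literals; no variables occur). -/
def IsDataGraph (Uso Lit : Set N) (G : Set (Triple N P)) : Prop :=
  G.Nonempty ∧ ∀ t ∈ G, subj t ∈ Uso ∧ obj t ∈ Uso ∪ Lit

/-- A BGP query: a nonempty set of query triples (subjects are URIs or variables,
objects are URIs, literals or variables). -/
def IsBGP (Uso Lit Var : Set N) (Q : Set (Triple N P)) : Prop :=
  Q.Nonempty ∧ ∀ t ∈ Q, subj t ∈ Uso ∪ Var ∧ obj t ∈ Uso ∪ Lit ∪ Var

/-- A query is ground if it contains no variables. -/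
def Ground (Var : Set N) (Q : Set (Triple N P)) : Prop := varsOf Var Q = ∅

/-- Two nodes are adjacent in `Q` if some triple of `Q` connects them (in either
direction). -/
def adjStep (Q : Set (Triple N P)) (u v : N) : Prop :=
  ∃ p : P, (u, p, v) ∈ Q ∨ (v, p, u) ∈ Q

/-- `vs` is the node sequence of a generalized path in `Q`: at least two pairwise
distinct nodes, consecutive nodes connected by triples of `Q` (in either direction). -/
def IsGenPathSeq (Q : Set (Triple N P)) (vs : List N) : Prop :=
  2 ≤ vs.length ∧ vs.Nodup ∧ vs.Chain' (adjStep Q)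

/-- `vs` is the node sequence of a generalized path in `Q` between `u` and `v`. -/
def GenPathBetween (Q : Set (Triple N P)) (u v : N) (vs : List N) : Prop :=
  IsGenPathSeq Q vs ∧ vs.head? = some u ∧ vs.getLast? = some v

/-- `Part` is a connected-variable partition of the set of variables of `Q`:
a partition of `varsOf Var Q` such that (1) any two distinct variables of a class are
connected by a generalized path all of whose nodes are variables of that class, and
(2) no triple of `Q` has a variable of one class as subject and a variable of a
different class as object. -/
def IsCVPartition (Var : Set N) (Q : Set (Triple N P)) (Part : Set (Set N)) : Prop :=
  (∀ Pi ∈ Part, Pi.Nonempty) ∧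
  (⋃₀ Part = varsOf Var Q) ∧
  (∀ Pi ∈ Part, ∀ Pj ∈ Part, Pi ≠ Pj → Disjoint Pi Pj) ∧
  (∀ Pi ∈ Part, ∀ u ∈ Pi, ∀ v ∈ Pi, u ≠ v →
      ∃ vs, GenPathBetween Q u v vs ∧ ∀ w ∈ vs, w ∈ Pi) ∧
  (∀ Pi ∈ Part, ∀ Pj ∈ Part, Pi ≠ Pj →
      ¬ ∃ t ∈ Q, (subj t ∈ Pi ∧ obj t ∈ Pj) ∨ (subj t ∈ Pj ∧ obj t ∈ Pi))

/-- `Q` is loosely-connected: every generalized path between two distinct variables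
contains at least one non-variable node. -/
def LooselyConnected (Var : Set N) (Q : Set (Triple N P)) : Prop :=
  ∀ X ∈ varsOf Var Q, ∀ Y ∈ varsOf Var Q, X ≠ Y →
    ∀ vs, GenPathBetween Q X Y vs → ∃ w ∈ vs, w ∉ Var

/-- The subquery of `Q` induced by a class `Pi` of variables:
`Q_{P_i} = { (s,p,o) ∈ Q : s ∈ P_i or o ∈ P_i }`. -/
def classQuery (Q : Set (Triple N P)) (Pi : Set N) : Set (Triple N P) :=
  {t ∈ Q | subj t ∈ Pi ∨ obj t ∈ Pi}

/-- The ground remainder `Q_G = Q \ ∪_i Q_{P_i}`. -/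
def groundRest (Q : Set (Triple N P)) (Part : Set (Set N)) : Set (Triple N P) :=
  Q \ ⋃ Pi ∈ Part, classQuery Q Pi

/-- The connected-variable decomposition of `Q` w.r.t. the connected-variable
partition `Part`: the queries `Q_{P_i}` together with the ground query `Q_G` when it
is nonempty. -/
def DCV (Q : Set (Triple N P)) (Part : Set (Set N)) : Set (Set (Triple N P)) :=
  {Qi | ∃ Pi ∈ Part, Qi = classQuery Q Pi} ∪
    {Qg | Qg = groundRest Q Part ∧ Qg.Nonempty}

/-- A simple var-centric (generalized) star query: there is a central node `c` which
is a variable, every triple has `c` as subject or object, and every node adjacent to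
`c` is a constant. -/
def SimpleVarCentricStar (Var : Set N) (Q : Set (Triple N P)) : Prop :=
  ∃ c ∈ nodes Q, c ∈ Var ∧
    (∀ t ∈ Q, subj t = c ∨ obj t = c) ∧
    (∀ t ∈ Q, (subj t = c → obj t ∉ Var) ∧ (obj t = c → subj t ∉ Var))

/-- A total embedding of `Q` in `G`: a mapping defined exactly on the nodes of `Q`,
fixing every non-variable node, and mapping every triple of `Q` into a triple of `G`. -/
def TotalEmb (Var : Set N) (Q G : Set (Triple N P)) (e : N → Option N) : Prop :=
  (∀ v, (e v).isSome ↔ v ∈ nodes Q) ∧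
  (∀ v ∈ nodes Q, v ∉ Var → e v = some v) ∧
  (∀ t ∈ Q, ∃ s' o', e (subj t) = some s' ∧ e (obj t) = some o' ∧
      (s', pred t, o') ∈ G)

/-- A partial embedding of `Q` in `G`: a partial mapping on the nodes of `Q`,
fixing every non-variable node on which it is defined, and mapping every triple of
`Q` both of whose endpoints are defined into a triple of `G`. -/
def PartialEmb (Var : Set N) (Q G : Set (Triple N P)) (e : N → Option N) : Prop :=
  (∀ v, (e v).isSome → v ∈ nodes Q) ∧
  (∀ v ∈ nodes Q, v ∉ Var → ∀ w, e v = some w → w = v) ∧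
  (∀ t ∈ Q, ∀ s' o', e (subj t) = some s' → e (obj t) = some o' →
      (s', pred t, o') ∈ G)

/-- Two partial mappings are compatible if they agree wherever both are defined. -/
def Compatible (e₁ e₂ : N → Option N) : Prop :=
  ∀ v a b, e₁ v = some a → e₂ v = some b → a = b

/-- The join `e₁ ⊗ e₂` of two partial mappings: agrees with `e₁` wherever `e₁` is
defined and with `e₂` wherever `e₂` is defined and `e₁` is not. -/
def pjoin (e₁ e₂ : N → Option N) : N → Option N :=
  fun v => (e₁ v).elim (e₂ v) some

/-- The iterated join `e₁ ⊗ e₂ ⊗ … ⊗ eₙ` of a list of partial mappings. -/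
def pjoinList (l : List (N → Option N)) : N → Option N :=
  l.foldr pjoin (fun _ => none)

open Classical in
/-- The restriction of a partial mapping to a set of nodes. -/
noncomputable def restrictTo (S : Set N) (e : N → Option N) : N → Option N :=
  fun v => if v ∈ S then e v else none

open Classical in
/-- The identity partial mapping on a set of nodes. -/
noncomputable def idOn (S : Set N) : N → Option N :=
  fun v => if v ∈ S then some v else none

/-- The answer determined by an embedding: its restriction to the variables of `Q`. -/
noncomputable def answerOf (Var : Set N) (Q : Set (Triple N P)) (e : N → Option N) :
    N → Option N :=
  restrictTo (varsOf Var Q) e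

/-- The set of answers of `Q` over `G`. -/
def answers (Var : Set N) (Q G : Set (Triple N P)) : Set (N → Option N) :=
  {a | ∃ e, TotalEmb Var Q G e ∧ a = answerOf Var Q e}

open Classical in
/-- Substituting the constant `c` for the variable `X` in a triple. -/
noncomputable def substTriple (X c : N) (t : Triple N P) : Triple N P :=
  ((if t.1 = X then c else t.1), t.2.1, (if t.2.2 = X then c else t.2.2))

/-- The query `Q[X := c]` obtained by replacing every occurrence of `X` by `c`. -/
noncomputable def substQuery (X c : N) (Q : Set (Triple N P)) : Set (Triple N P) :=
  substTriple X c '' Q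

/-! ### Auxiliary lemmas -/

lemma pjoinList_cons (e : N → Option N) (l : List (N → Option N)) (v : N) :
    pjoinList (e :: l) v = (e v).elim (pjoinList l v) some := rfl

lemma pjoinList_eq_some {l : List (N → Option N)} {v a : N}
    (h : pjoinList l v = some a) : ∃ e ∈ l, e v = some a := by
  induction l with
  | nil => simp [pjoinList] at h
  | cons e l ih =>
    rw [pjoinList_cons] at h
    cases he : e v with
    | none =>
      rw [he] at h
      obtain ⟨e', h1, h2⟩ := ih h
      exact ⟨e', List.mem_cons_of_mem _ h1, h2⟩
    | some b =>
      rw [he] at h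
      simp only [Option.elim] at h
      exact ⟨e, List.mem_cons_self, by rw [he, h]⟩

lemma pjoinList_isSome {l : List (N → Option N)} {v : N} {e : N → Option N}
    (he : e ∈ l) (h : (e v).isSome) : (pjoinList l v).isSome := by
  induction l with
  | nil => simp at he
  | cons e' l ih =>
    rw [pjoinList_cons]
    cases he' : e' v with
    | some b => simp
    | none =>
      simp only [Option.elim]
      rcases List.mem_cons.mp he with rfl | hmem
      · rw [he'] at h; simp at h
      · exact ih hmem

lemma pjoinList_agree {l : List (N → Option N)} {v a : N} {e : N → Option N}
    (he : e ∈ l) (hv : e v = some a)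
    (hcomp : ∀ e' ∈ l, ∀ b, e' v = some b → b = a) :
    pjoinList l v = some a := by
  have h1 : (pjoinList l v).isSome := pjoinList_isSome he (by rw [hv]; rfl)
  obtain ⟨b, hb⟩ := Option.isSome_iff_exists.mp h1
  rw [hb]
  obtain ⟨e', h2, h3⟩ := pjoinList_eq_some hb
  rw [hcomp e' h2 b h3]

lemma nodes_mono {Q Q' : Set (Triple N P)} (h : Q ⊆ Q') : nodes Q ⊆ nodes Q' := by
  rintro v ⟨t, ht, hv⟩
  exact ⟨t, h ht, hv⟩

end RDFBGP


open RDFBGP in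
/-- total embeddings of the members of the connected-variable
decomposition of `Q` are pairwise compatible partial embeddings of `Q`, and their
join is a total embedding of `Q`. -/
theorem dcv_embeddings_join_total {N P : Type} (Uso Lit Var : Set N)
    (hUsoInf : Uso.Infinite) (hUsoVar : Disjoint Uso Var)
    (hLitVar : Disjoint Lit Var) (hUsoLit : Disjoint Uso Lit)
    (Q G : Set (Triple N P)) (Part : Set (Set N))
    (n : ℕ) (Qs : Fin n → Set (Triple N P)) (es : Fin n → N → Option N)
    (hQ : IsBGP Uso Lit Var Q) (hG : IsDataGraph Uso Lit G)
    (hPart : IsCVPartition Var Q Part)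
    (hQsInj : Function.Injective Qs)
    (hQsRange : Set.range Qs = DCV Q Part)
    (hEmb : ∀ i, TotalEmb Var (Qs i) G (es i)) :
    (∀ i, PartialEmb Var Q G (es i)) ∧
    (∀ i j, i ≠ j → Compatible (es i) (es j)) ∧
    TotalEmb Var Q G (pjoinList (List.ofFn es)) := by
  obtain ⟨hQne, hQwf⟩ := hQ
  obtain ⟨hNE, hUnion, hDisj, hConn, hNoCross⟩ := hPart
  -- each Qs i is in the decomposition
  have hDCVi : ∀ i, Qs i ∈ DCV Q Part := by
    intro i; rw [← hQsRange]; exact ⟨i, rfl⟩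
  -- each member of the decomposition is a subset of Q
  have hsub : ∀ i, Qs i ⊆ Q := by
    intro i
    rcases hDCVi i with ⟨Pi, _, hEq⟩ | ⟨hEq, _⟩
    · rw [hEq]; exact fun t ht => ht.1
    · rw [hEq]; exact fun t ht => ht.1
  -- variables of Q lie in some class
  have hVarClass : ∀ v ∈ nodes Q, v ∈ Var → ∃ Pi ∈ Part, v ∈ Pi := by
    intro v hv hvVar
    have : v ∈ ⋃₀ Part := by rw [hUnion]; exact ⟨hv, hvVar⟩
    exact this
  -- variable nodes of a class query belong to the class
  have hClassVar : ∀ Pi ∈ Part, ∀ v, v ∈ nodes (classQuery Q Pi) → v ∈ Var → v ∈ Pi := by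
    intro Pi hPi v hv hvVar
    obtain ⟨t, ht, hvt⟩ := hv
    obtain ⟨htQ, hcls⟩ := ht
    have hvQ : v ∈ nodes Q := ⟨t, htQ, hvt⟩
    obtain ⟨Pj, hPj, hvPj⟩ := hVarClass v hvQ hvVar
    by_cases hij : Pi = Pj
    · rwa [hij]
    · exfalso
      apply hNoCross Pi hPi Pj hPj hij
      rcases hvt with h1 | h1 <;> rcases hcls with h2 | h2
      · rw [h1] at h2; exact absurd h2 (fun h => (hDisj Pi hPi Pj hPj hij).ne_of_mem h hvPj rfl)
      · exact ⟨t, htQ, Or.inr ⟨by rwa [h1], h2⟩⟩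
      · exact ⟨t, htQ, Or.inl ⟨h2, by rwa [h1]⟩⟩
      · rw [h1] at h2; exact absurd h2 (fun h => (hDisj Pi hPi Pj hPj hij).ne_of_mem h hvPj rfl)
  -- nodes of the ground remainder are never variables
  have hGroundVar : ∀ v ∈ nodes (groundRest Q Part), v ∉ Var := by
    rintro v ⟨t, ⟨htQ, htN⟩, hvt⟩ hvVar
    have hvQ : v ∈ nodes Q := ⟨t, htQ, hvt⟩
    obtain ⟨Pi, hPi, hvPi⟩ := hVarClass v hvQ hvVar
    apply htN
    refine Set.mem_biUnion hPi ?_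
    exact ⟨htQ, by rcases hvt with h | h <;> [exact Or.inl (h ▸ hvPi); exact Or.inr (h ▸ hvPi)]⟩
  -- every triple of Q appears in some Qs i
  have hCover : ∀ t ∈ Q, ∃ i, t ∈ Qs i := by
    intro t ht
    by_cases hU : t ∈ ⋃ Pi ∈ Part, classQuery Q Pi
    · obtain ⟨Pi, hPi, htPi⟩ := Set.mem_iUnion₂.mp hU
      have : classQuery Q Pi ∈ DCV Q Part := Or.inl ⟨Pi, hPi, rfl⟩
      rw [← hQsRange] at this
      obtain ⟨i, hi⟩ := this
      exact ⟨i, by rw [hi]; exact htPi⟩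
    · have htg : t ∈ groundRest Q Part := ⟨ht, hU⟩
      have : groundRest Q Part ∈ DCV Q Part := Or.inr ⟨rfl, ⟨t, htg⟩⟩
      rw [← hQsRange] at this
      obtain ⟨i, hi⟩ := this
      exact ⟨i, by rw [hi]; exact htg⟩
  -- ground triples of Q are in G
  have hGroundInG : ∀ t ∈ Q, subj t ∉ Var → obj t ∉ Var →
      (subj t, pred t, obj t) ∈ G := by
    intro t ht hs ho
    obtain ⟨i, hti⟩ := hCover t ht
    obtain ⟨hE1, hE2, hE3⟩ := hEmb i
    obtain ⟨s', o', hs', ho', hG'⟩ := hE3 t hti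
    have hsn : subj t ∈ nodes (Qs i) := ⟨t, hti, Or.inl rfl⟩
    have hon : obj t ∈ nodes (Qs i) := ⟨t, hti, Or.inr rfl⟩
    have h1 : es i (subj t) = some (subj t) := hE2 _ hsn hs
    have h2 : es i (obj t) = some (obj t) := hE2 _ hon ho
    rw [h1] at hs'; rw [h2] at ho'
    rw [Option.some_inj] at hs' ho'
    rwa [← hs', ← ho'] at hG'
  -- Part 1: each es i is a partial embedding of Q in G
  have hPE : ∀ i, PartialEmb Var Q G (es i) := by
    intro i
    obtain ⟨hE1, hE2, hE3⟩ := hEmb i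
    refine ⟨fun v hv => nodes_mono (hsub i) ((hE1 v).mp hv), ?_, ?_⟩
    · intro v hvQ hvVar w hw
      have : v ∈ nodes (Qs i) := (hE1 v).mp (by rw [hw]; rfl)
      have := hE2 v this hvVar
      rw [this] at hw
      exact (Option.some_inj.mp hw).symm
    · intro t ht s' o' hs' ho'
      have hsn : subj t ∈ nodes (Qs i) := (hE1 _).mp (by rw [hs']; rfl)
      have hon : obj t ∈ nodes (Qs i) := (hE1 _).mp (by rw [ho']; rfl)
      -- either t belongs to Qs i, or both endpoints are constants
      have hkey : t ∈ Qs i ∨ (subj t ∉ Var ∧ obj t ∉ Var) := by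
        rcases hDCVi i with ⟨Pi, hPi, hEq⟩ | ⟨hEq, _⟩
        · by_cases hsv : subj t ∈ Var
          · have : subj t ∈ Pi := hClassVar Pi hPi _ (hEq ▸ hsn) hsv
            exact Or.inl (hEq ▸ ⟨ht, Or.inl this⟩)
          · by_cases hov : obj t ∈ Var
            · have : obj t ∈ Pi := hClassVar Pi hPi _ (hEq ▸ hon) hov
              exact Or.inl (hEq ▸ ⟨ht, Or.inr this⟩)
            · exact Or.inr ⟨hsv, hov⟩
        · exact Or.inr ⟨hGroundVar _ (hEq ▸ hsn), hGroundVar _ (hEq ▸ hon)⟩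
      rcases hkey with hti | ⟨hs, ho⟩
      · obtain ⟨s'', o'', hs'', ho'', hG'⟩ := hE3 t hti
        rw [hs'] at hs''; rw [ho'] at ho''
        rw [Option.some_inj] at hs'' ho''
        rwa [← hs'', ← ho''] at hG'
      · have h1 : es i (subj t) = some (subj t) := hE2 _ hsn hs
        have h2 : es i (obj t) = some (obj t) := hE2 _ hon ho
        rw [h1] at hs'; rw [h2] at ho'
        rw [Option.some_inj] at hs' ho'
        rw [← hs', ← ho']
        exact hGroundInG t ht hs ho
  -- Part 2: pairwise compatibility
  have hCompat : ∀ i j, i ≠ j → Compatible (es i) (es j) := by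
    intro i j hij v a b ha hb
    obtain ⟨hE1i, hE2i, _⟩ := hEmb i
    obtain ⟨hE1j, hE2j, _⟩ := hEmb j
    have hvi : v ∈ nodes (Qs i) := (hE1i v).mp (by rw [ha]; rfl)
    have hvj : v ∈ nodes (Qs j) := (hE1j v).mp (by rw [hb]; rfl)
    have hvVar : v ∉ Var := by
      intro hv
      rcases hDCVi i with ⟨Pi, hPi, hEqi⟩ | ⟨hEqi, _⟩
      · rcases hDCVi j with ⟨Pj, hPj, hEqj⟩ | ⟨hEqj, _⟩
        · have h1 : v ∈ Pi := hClassVar Pi hPi v (hEqi ▸ hvi) hv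
          have h2 : v ∈ Pj := hClassVar Pj hPj v (hEqj ▸ hvj) hv
          have hPij : Pi ≠ Pj := by
            rintro rfl
            exact hij (hQsInj (by rw [hEqi, hEqj]))
          exact (hDisj Pi hPi Pj hPj hPij).ne_of_mem h1 h2 rfl
        · exact hGroundVar v (hEqj ▸ hvj) hv
      · exact hGroundVar v (hEqi ▸ hvi) hv
    have h1 : es i v = some v := hE2i v hvi hvVar
    have h2 : es j v = some v := hE2j v hvj hvVar
    rw [h1] at ha; rw [h2] at hb
    rw [← Option.some_inj.mp ha, ← Option.some_inj.mp hb]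
  -- compatibility for all pairs (including equal indices)
  have hCompatAll : ∀ i j, Compatible (es i) (es j) := by
    intro i j
    by_cases hij : i = j
    · subst hij
      intro v a b ha hb
      rw [ha] at hb
      exact Option.some_inj.mp hb
    · exact hCompat i j hij
  refine ⟨hPE, hCompat, ?_, ?_, ?_⟩
  -- Part 3a: definedness exactly on nodes of Q
  · intro v
    constructor
    · intro hv
      obtain ⟨a, ha⟩ := Option.isSome_iff_exists.mp hv
      obtain ⟨e', he', hva⟩ := pjoinList_eq_some ha
      obtain ⟨i, hi⟩ := List.mem_ofFn.mp he'
      exact (hPE i).1 v (by rw [hi, hva]; rfl)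
    · intro hv
      obtain ⟨t, ht, hvt⟩ := hv
      obtain ⟨i, hti⟩ := hCover t ht
      have hvn : v ∈ nodes (Qs i) := ⟨t, hti, hvt⟩
      have : (es i v).isSome := ((hEmb i).1 v).mpr hvn
      exact pjoinList_isSome (List.mem_ofFn.mpr ⟨i, rfl⟩) this
  -- Part 3b: constants are fixed
  · intro v hvQ hvVar
    obtain ⟨t, ht, hvt⟩ := hvQ
    obtain ⟨i, hti⟩ := hCover t ht
    have hvn : v ∈ nodes (Qs i) := ⟨t, hti, hvt⟩
    have h1 : es i v = some v := (hEmb i).2.1 v hvn hvVar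
    apply pjoinList_agree (List.mem_ofFn.mpr ⟨i, rfl⟩) h1
    intro e' he' b hb
    obtain ⟨j, hj⟩ := List.mem_ofFn.mp he'
    exact (hCompatAll j i v b v (by rw [hj]; exact hb) h1)
  -- Part 3c: triples are mapped into G
  · intro t ht
    obtain ⟨i, hti⟩ := hCover t ht
    obtain ⟨s', o', hs', ho', hG'⟩ := (hEmb i).2.2 t hti
    refine ⟨s', o', ?_, ?_, hG'⟩
    · apply pjoinList_agree (List.mem_ofFn.mpr ⟨i, rfl⟩) hs'
      intro e' he' b hb
      obtain ⟨j, hj⟩ := List.mem_ofFn.mp he'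
      exact hCompatAll j i _ b s' (by rw [hj]; exact hb) hs'
    · apply pjoinList_agree (List.mem_ofFn.mpr ⟨i, rfl⟩) ho'
      intro e' he' b hb
      obtain ⟨j, hj⟩ := List.mem_ofFn.mp he'
      exact hCompatAll j i _ b o' (by rw [hj]; exact hb) ho'
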